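/- For every positive odd integer n, the set {1, 2, ..., 3n} can be partitioned into n triples such that each triple sums to either 6n or 3n, and each triple contains exactly one integer from each residue class modulo 3. -/

import Mathlib

def mytau (n i : ℕ) : ℕ := if 2*i+2 ≤ n then n-2-2*i else 2*n-2-2*i

def mytrip (n i : ℕ) : Finset ℕ := {3*i+1, 3*i+2, 3*(mytau n i)+3}

lemma mytau_spec (n i : ℕ) (hn : 0 < n) (hi : i < n) :
    mytau n i < n ∧ (i + i + mytau n i = n - 2 ∨ i + i + mytau n i = 2*n - 2) := by
  unfold mytau
  split <;> omega

lemma mytau_surj (n c : ℕ) (ho : Odd n) (hc : c < n) : ∃ i < n, mytau n i = c := by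
  obtain ⟨k, hk⟩ := ho
  rcases Nat.even_or_odd c with ⟨m, hm⟩ | ⟨m, hm⟩
  · refine ⟨n - 1 - m, by omega, ?_⟩
    unfold mytau
    split <;> omega
  · refine ⟨k - 1 - m, by omega, ?_⟩
    unfold mytau
    split <;> omega

lemma mem_mytrip (n i x : ℕ) : x ∈ mytrip n i ↔ x = 3*i+1 ∨ x = 3*i+2 ∨ x = 3*(mytau n i)+3 := by
  simp [mytrip]

theorem stmt_1 (n : ℕ) (hn : 0 < n) (ho : Odd n) :
    ∃ T : Finset (Finset ℕ), T.card = n ∧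
      (T : Set (Finset ℕ)).PairwiseDisjoint id ∧
      T.sup id = Finset.Icc 1 (3 * n) ∧
      ∀ t ∈ T, t.card = 3 ∧ ((∑ x ∈ t, x) = 6 * n ∨ (∑ x ∈ t, x) = 3 * n) ∧
        ∀ r < 3, ∃! x, x ∈ t ∧ x % 3 = r := by
  obtain ⟨k, hk⟩ := ho
  refine ⟨(Finset.range n).image (mytrip n), ?_, ?_, ?_, ?_⟩
  · rw [Finset.card_image_of_injOn, Finset.card_range]
    intro i hi j hj hij
    simp only [Finset.coe_range, Set.mem_Iio] at hi hj
    have h1 : (3*i+1 : ℕ) ∈ mytrip n j := by rw [← hij, mem_mytrip]; left; rfl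
    rw [mem_mytrip] at h1
    omega
  · intro a ha b hb hab
    simp only [Finset.coe_image, Set.mem_image, Finset.mem_coe, Finset.mem_range] at ha hb
    obtain ⟨i, hi, rfl⟩ := ha
    obtain ⟨j, hj, rfl⟩ := hb
    have hij : i ≠ j := fun h => hab (by rw [h])
    have si := mytau_spec n i hn hi
    have sj := mytau_spec n j hn hj
    refine Finset.disjoint_left.2 ?_
    intro x hx hx'
    rw [id, mem_mytrip] at hx hx'
    omega
  · apply Finset.ext
    intro x
    simp only [Finset.mem_sup, Finset.mem_image, Finset.mem_range, Finset.mem_Icc, id]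
    constructor
    · rintro ⟨t, ⟨i, hi, rfl⟩, hx⟩
      rw [mem_mytrip] at hx
      have := mytau_spec n i hn hi
      omega
    · rintro ⟨hx1, hx2⟩
      have h3 : x % 3 = 0 ∨ x % 3 = 1 ∨ x % 3 = 2 := by omega
      rcases h3 with h | h | h
      · obtain ⟨i, hi, hti⟩ := mytau_surj n (x/3 - 1) ⟨k, hk⟩ (by omega)
        exact ⟨mytrip n i, ⟨i, hi, rfl⟩, by rw [mem_mytrip]; right; right; omega⟩
      · exact ⟨mytrip n (x/3), ⟨x/3, by omega, rfl⟩, by rw [mem_mytrip]; left; omega⟩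
      · exact ⟨mytrip n (x/3), ⟨x/3, by omega, rfl⟩, by rw [mem_mytrip]; right; left; omega⟩
  · intro t ht
    simp only [Finset.mem_image, Finset.mem_range] at ht
    obtain ⟨i, hi, rfl⟩ := ht
    obtain ⟨htau, hsum⟩ := mytau_spec n i hn hi
    refine ⟨?_, ?_, ?_⟩
    · rw [mytrip, Finset.card_insert_of_notMem (by simp; omega),
        Finset.card_insert_of_notMem (by simp; omega), Finset.card_singleton]
    · rw [mytrip, Finset.sum_insert (by simp; omega),
        Finset.sum_insert (by simp; omega), Finset.sum_singleton]
      omega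
    · intro r hr
      interval_cases r
      · refine ⟨3*(mytau n i)+3, ⟨by rw [mem_mytrip]; right; right; rfl, by omega⟩, ?_⟩
        rintro y ⟨hy, hy3⟩; rw [mem_mytrip] at hy; omega
      · refine ⟨3*i+1, ⟨by rw [mem_mytrip]; left; rfl, by omega⟩, ?_⟩
        rintro y ⟨hy, hy3⟩; rw [mem_mytrip] at hy; omega
      · refine ⟨3*i+2, ⟨by rw [mem_mytrip]; right; left; rfl, by omega⟩, ?_⟩
        rintro y ⟨hy, hy3⟩; rw [mem_mytrip] at hy; omega
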